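/- For every integer N ≥ 4, ∑_{k=1}^{N−1} ( cos(2πk/N) + 1/(2 − 2cos(2πk/N)) ) · ( 1 − exp(−4πik/N) ) = N − 2 (as complex numbers; in particular the sum is real). -/

import Mathlib

open Real Finset

noncomputable def zfun (N k : ℕ) : ℂ := Complex.exp (2 * (π:ℂ) * Complex.I * k / N)

lemma aux_sum_roots (N : ℕ) (hN : 1 ≤ N) (w : ℂ) (hw : w ^ N = 1) (h1 : w ≠ 1) :
    ∑ k ∈ Finset.Icc 1 (N-1), w ^ k = -1 := by
  have h0 : ∑ k ∈ Finset.range N, w ^ k = 0 := by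
    rw [geom_sum_eq h1, hw]; simp
  have hIcc : Finset.Icc 1 (N-1) = Finset.Ico 1 N := by
    rw [← Finset.Ico_add_one_right_eq_Icc]; congr 1; omega
  have hsplit : ∑ k ∈ Finset.range N, w ^ k
      = (∑ k ∈ Finset.Ico 0 1, w ^ k) + ∑ k ∈ Finset.Ico 1 N, w ^ k := by
    rw [Finset.range_eq_Ico, Finset.sum_Ico_consecutive _ (by omega) (by omega)]
  have h1' : (∑ k ∈ Finset.Ico 0 1, w ^ k) = 1 := by simp
  rw [hIcc]
  rw [hsplit, h1'] at h0
  linear_combination h0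

lemma aux_zeta_pow_ne_one (N m : ℕ) (hm : 0 < m) (hmN : m < N) :
    Complex.exp (2 * (π:ℂ) * Complex.I / N) ^ m ≠ 1 := by
  have hN0 : (N:ℂ) ≠ 0 := by
    exact_mod_cast Nat.cast_ne_zero.mpr (by omega)
  rw [← Complex.exp_nat_mul, Ne, Complex.exp_eq_one_iff]
  rintro ⟨n, hn⟩
  have hπ : (π:ℂ) ≠ 0 := by exact_mod_cast Real.pi_ne_zero
  have hI : Complex.I ≠ 0 := Complex.I_ne_zero
  have hmn : (m:ℂ) = (n:ℂ) * N := by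
    field_simp at hn
    have h2 : (2:ℂ) * π * Complex.I ≠ 0 := by simp [hπ, hI]
    exact mul_right_cancel₀ h2 (by linear_combination (2 * (π:ℂ) * Complex.I) * hn)
  have hmnZ : (m:ℤ) = n * N := by exact_mod_cast hmn
  have hdvd : (N:ℤ) ∣ (m:ℤ) := ⟨n, by linarith [hmnZ]⟩
  have := Int.le_of_dvd (by exact_mod_cast hm) hdvd
  omega

lemma aux_term_identity (z : ℂ) (hz0 : z ≠ 0) (hz1 : z ≠ 1) :
    ((z + z⁻¹)/2 + 1 / (2 - 2 * ((z + z⁻¹)/2))) * (1 - (z⁻¹)^2)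
      = z/2 - (z⁻¹)^3/2 + z⁻¹ - 2 * (1/(z - 1)) := by
  have hz1' : z - 1 ≠ 0 := sub_ne_zero.mpr hz1
  have hd : (2:ℂ) - 2 * ((z + z⁻¹)/2) = -(z-1)^2 / z := by
    field_simp; ring
  rw [hd, one_div_div]
  have hu : z * z⁻¹ = 1 := mul_inv_cancel₀ hz0
  field_simp
  ring

lemma zfun_eq_pow (N k : ℕ) : zfun N k = Complex.exp (2 * (π:ℂ) * Complex.I / N) ^ k := by
  rw [zfun, ← Complex.exp_nat_mul]
  congr 1
  ring

lemma zfun_ne_zero (N k : ℕ) : zfun N k ≠ 0 := Complex.exp_ne_zero _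

lemma zfun_ne_one (N k : ℕ) (h1 : 1 ≤ k) (h2 : k ≤ N - 1) (hN : 4 ≤ N) :
    zfun N k ≠ 1 := by
  rw [zfun_eq_pow]
  exact aux_zeta_pow_ne_one N k (by omega) (by omega)

lemma zfun_cos (N k : ℕ) :
    ((Real.cos (2 * π * k / N) : ℝ) : ℂ) = (zfun N k + (zfun N k)⁻¹) / 2 := by
  rw [Complex.ofReal_cos, Complex.cos, zfun, ← Complex.exp_neg]
  push_cast
  ring_nf

lemma zfun_exp (N k : ℕ) :
    Complex.exp (-(4 * (π:ℂ) * Complex.I * k / N)) = ((zfun N k)⁻¹)^2 := by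
  rw [show -(4 * (π:ℂ) * Complex.I * k / N) = (2:ℕ) * (-(2 * (π:ℂ) * Complex.I * k / N)) by
    push_cast; ring]
  rw [Complex.exp_nat_mul, Complex.exp_neg, zfun]

lemma zfun_reflect (N k : ℕ) (h1 : 1 ≤ k) (h2 : k ≤ N - 1) (hN : 4 ≤ N) :
    zfun N (N - k) = (zfun N k)⁻¹ := by
  have hN0 : (N:ℂ) ≠ 0 := Nat.cast_ne_zero.mpr (by omega)
  have hc : ((N - k : ℕ) : ℂ) = (N:ℂ) - k := by
    push_cast [Nat.cast_sub (by omega : k ≤ N)]; ring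
  rw [zfun, zfun, hc, show 2 * (π:ℂ) * Complex.I * ((N:ℂ) - k) / N
      = 2 * π * Complex.I + -(2 * π * Complex.I * k / N) by field_simp; ring]
  rw [Complex.exp_add, Complex.exp_two_pi_mul_I, one_mul, Complex.exp_neg]

/-- For every integer `N ≥ 4`,
`∑_{k=1}^{N-1} (cos(2πk/N) + 1/(2 - 2cos(2πk/N))) · (1 - exp(-4πik/N)) = N - 2`
as complex numbers. -/
theorem ngon_second_eigenvalue_sum (N : ℕ) (hN : 4 ≤ N) :
    ∑ k ∈ Finset.Icc 1 (N - 1),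
      (((Real.cos (2 * π * k / N) : ℝ) : ℂ) +
          1 / (2 - 2 * ((Real.cos (2 * π * k / N) : ℝ) : ℂ))) *
        (1 - Complex.exp (-(4 * (π : ℂ) * Complex.I * k / N))) = (N : ℂ) - 2 := by
  have hN0 : (N:ℂ) ≠ 0 := Nat.cast_ne_zero.mpr (by omega)
  have hterm : ∀ k ∈ Finset.Icc 1 (N-1),
      (((Real.cos (2 * π * k / N) : ℝ) : ℂ) +
          1 / (2 - 2 * ((Real.cos (2 * π * k / N) : ℝ) : ℂ))) *
        (1 - Complex.exp (-(4 * (π:ℂ) * Complex.I * k / N)))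
      = zfun N k / 2 - ((zfun N k)⁻¹)^3 / 2 + (zfun N k)⁻¹ - 2 * (1/(zfun N k - 1)) := by
    intro k hk
    simp only [Finset.mem_Icc] at hk
    rw [zfun_cos, zfun_exp]
    exact aux_term_identity _ (zfun_ne_zero N k) (zfun_ne_one N k hk.1 hk.2 hN)
  rw [Finset.sum_congr rfl hterm]
  rw [Finset.sum_sub_distrib, Finset.sum_add_distrib, Finset.sum_sub_distrib,
    ← Finset.sum_div, ← Finset.sum_div, ← Finset.mul_sum]
  have hζN : Complex.exp (2 * (π:ℂ) * Complex.I / N) ^ N = 1 := by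
    rw [← Complex.exp_nat_mul,
      show (N:ℂ) * (2 * π * Complex.I / N) = 2 * π * Complex.I by field_simp]
    exact Complex.exp_two_pi_mul_I
  have hζ1 : Complex.exp (2 * (π:ℂ) * Complex.I / N) ≠ 1 := by
    have := aux_zeta_pow_ne_one N 1 (by omega) (by omega)
    simpa using this
  have hζ3 : Complex.exp (2 * (π:ℂ) * Complex.I / N) ^ 3 ≠ 1 :=
    aux_zeta_pow_ne_one N 3 (by omega) (by omega)
  have e1 : ∑ k ∈ Finset.Icc 1 (N-1), zfun N k = -1 := by
    rw [Finset.sum_congr rfl (fun k _ => zfun_eq_pow N k)]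
    exact aux_sum_roots N (by omega) _ hζN hζ1
  have e2 : ∑ k ∈ Finset.Icc 1 (N-1), ((zfun N k)⁻¹)^3 = -1 := by
    have h : ∀ k : ℕ, ((zfun N k)⁻¹)^3
        = ((Complex.exp (2 * (π:ℂ) * Complex.I / N))⁻¹ ^ 3) ^ k := by
      intro k
      rw [zfun_eq_pow, ← inv_pow, ← pow_mul, ← pow_mul, Nat.mul_comm]
    rw [Finset.sum_congr rfl (fun k _ => h k)]
    refine aux_sum_roots N (by omega) _ ?_ ?_
    · rw [← pow_mul, Nat.mul_comm, pow_mul, inv_pow, hζN]; simp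
    · rw [inv_pow, Ne, inv_eq_one]; exact hζ3
  have e3 : ∑ k ∈ Finset.Icc 1 (N-1), (zfun N k)⁻¹ = -1 := by
    have h : ∀ k : ℕ, (zfun N k)⁻¹
        = ((Complex.exp (2 * (π:ℂ) * Complex.I / N))⁻¹) ^ k := by
      intro k; rw [zfun_eq_pow, inv_pow]
    rw [Finset.sum_congr rfl (fun k _ => h k)]
    refine aux_sum_roots N (by omega) _ ?_ ?_
    · rw [inv_pow, hζN]; simp
    · rw [Ne, inv_eq_one]; exact hζ1
  have e4 : ∑ k ∈ Finset.Icc 1 (N-1), (1:ℂ)/(zfun N k - 1) = -((N:ℂ) - 1)/2 := by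
    have hrefl : ∑ k ∈ Finset.Icc 1 (N-1), (1:ℂ)/(zfun N k - 1)
        = ∑ k ∈ Finset.Icc 1 (N-1), (1:ℂ)/((zfun N k)⁻¹ - 1) := by
      refine Finset.sum_nbij' (i := fun k => N - k) (j := fun k => N - k) ?_ ?_ ?_ ?_ ?_
      · intro a ha; simp only [Finset.mem_Icc] at ha ⊢; omega
      · intro a ha; simp only [Finset.mem_Icc] at ha ⊢; omega
      · intro a ha; simp only [Finset.mem_Icc] at ha; show N - (N - a) = a; omega
      · intro a ha; simp only [Finset.mem_Icc] at ha; show N - (N - a) = a; omega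
      · intro a ha
        simp only [Finset.mem_Icc] at ha
        show (1:ℂ)/(zfun N a - 1) = 1/((zfun N (N - a))⁻¹ - 1)
        rw [zfun_reflect N a ha.1 ha.2 hN, inv_inv]
    have hpair : ∀ k ∈ Finset.Icc 1 (N-1),
        (1:ℂ)/(zfun N k - 1) + 1/((zfun N k)⁻¹ - 1) = -1 := by
      intro k hk
      simp only [Finset.mem_Icc] at hk
      have h0 := zfun_ne_zero N k
      have h1 := zfun_ne_one N k hk.1 hk.2 hN
      have h1' : zfun N k - 1 ≠ 0 := sub_ne_zero.mpr h1
      have h2' : (zfun N k)⁻¹ - 1 ≠ 0 := by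
        rw [Ne, sub_eq_zero, inv_eq_one]; exact h1
      have h3' : (1:ℂ) - zfun N k ≠ 0 := fun h => h1 (by linear_combination -h)
      field_simp
      ring
    have h2S : 2 * (∑ k ∈ Finset.Icc 1 (N-1), (1:ℂ)/(zfun N k - 1))
        = ∑ k ∈ Finset.Icc 1 (N-1), ((1:ℂ)/(zfun N k - 1) + 1/((zfun N k)⁻¹ - 1)) := by
      rw [Finset.sum_add_distrib, ← hrefl]; ring
    rw [Finset.sum_congr rfl hpair, Finset.sum_const, Nat.card_Icc, nsmul_eq_mul] at h2S
    have hcard : ((N - 1 + 1 - 1 : ℕ) : ℂ) = (N:ℂ) - 1 := by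
      push_cast [Nat.cast_sub (by omega : 1 ≤ N)]; ring
    rw [hcard] at h2S
    linear_combination h2S / 2
  rw [e1, e2, e3, e4]
  ring
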